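/- Assume in addition that 1 + u² is a unit of R and set z = −(u(1+u²))⁻¹. Let f be a conjugation-invariant functional on TL_{1,2} with values in an R-module M satisfying f(tσ_1) = z·f(t). Then the equation f(t) = −((1+u²)/u)·u⁶·f(t_1σ_1) holds if and only if (1 − u⁶)·(1 − u²)·f(t) = 0 in M. -/
import Mathlib


/- Common setup: the mixed braid group `B_{1,n}`, the generalized Hecke algebra
of type B `H_{1,n}(u)`, and the generalized Temperley–Lieb algebra of type B
`TL_{1,n}`, following the paper's presentations. The generator `none` is `t`
and `some i` is `σ_{i+1}` for `i : Fin (n-1)`. -/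

/-- Generators of the mixed braid group `B_{1,n}`: `none` is `t`,
`some i` is `σ_{i+1}`. -/
abbrev B1Gen (n : ℕ) := Option (Fin (n - 1))

/-- The generator `t` in the free group. -/
def tF (n : ℕ) : FreeGroup (B1Gen n) := FreeGroup.of none

/-- The generator `σ_{i+1}` in the free group. -/
def sF (n : ℕ) (i : Fin (n - 1)) : FreeGroup (B1Gen n) := FreeGroup.of (some i)

/-- The relators of the mixed braid group `B_{1,n}`:
`σ₁tσ₁t = tσ₁tσ₁`; `tσ_i = σ_it` for `i > 1`; the braid relations
`σ_iσ_{i+1}σ_i = σ_{i+1}σ_iσ_{i+1}`; and `σ_iσ_j = σ_jσ_i` for `|i−j| > 1`. -/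
def mixedRels (n : ℕ) : Set (FreeGroup (B1Gen n)) :=
  { r | (∃ i : Fin (n - 1), (i : ℕ) = 0 ∧
          r = sF n i * tF n * sF n i * tF n * (tF n * sF n i * tF n * sF n i)⁻¹) ∨
        (∃ i : Fin (n - 1), 0 < (i : ℕ) ∧
          r = tF n * sF n i * (sF n i * tF n)⁻¹) ∨
        (∃ i j : Fin (n - 1), (j : ℕ) = (i : ℕ) + 1 ∧
          r = sF n i * sF n j * sF n i * (sF n j * sF n i * sF n j)⁻¹) ∨
        (∃ i j : Fin (n - 1), (i : ℕ) + 1 < (j : ℕ) ∧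
          r = sF n i * sF n j * (sF n j * sF n i)⁻¹) }

/-- The mixed braid group `B_{1,n}`. -/
abbrev MixedBraidGroup (n : ℕ) := PresentedGroup (mixedRels n)

/-- The generator `t` of `B_{1,n}`. -/
def tB (n : ℕ) : MixedBraidGroup n := PresentedGroup.of none

/-- The generator `σ_{i+1}` of `B_{1,n}`. -/
def sB (n : ℕ) (i : Fin (n - 1)) : MixedBraidGroup n := PresentedGroup.of (some i)

variable (R : Type) [CommRing R] (u : Rˣ)

/-- The quadratic Hecke relations `σ_i² = (u − u⁻¹)σ_i + 1` in the group
algebra `R[B_{1,n}]`. -/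
inductive heckeRel (n : ℕ) :
    MonoidAlgebra R (MixedBraidGroup n) → MonoidAlgebra R (MixedBraidGroup n) → Prop where
  | quad (i : Fin (n - 1)) :
      heckeRel n
        (MonoidAlgebra.of R (MixedBraidGroup n) (sB n i) *
          MonoidAlgebra.of R (MixedBraidGroup n) (sB n i))
        (((u : R) - ((u⁻¹ : Rˣ) : R)) • MonoidAlgebra.of R (MixedBraidGroup n) (sB n i) + 1)

/-- The generalized Hecke algebra of type B, `H_{1,n}(u)`. -/
abbrev Hecke (n : ℕ) := RingQuot (heckeRel R u n)

/-- The canonical (multiplicative) map `B_{1,n} → H_{1,n}(u)`. -/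
noncomputable def toHecke (n : ℕ) : MixedBraidGroup n →* Hecke R u n :=
  (RingQuot.mkRingHom (heckeRel R u n)).toMonoidHom.comp
    (MonoidAlgebra.of R (MixedBraidGroup n))

/-- The Temperley–Lieb relations: the generators
`1 + u(σ_i + σ_{i+1}) + u²(σ_iσ_{i+1} + σ_{i+1}σ_i) + u³σ_iσ_{i+1}σ_i`
of the defining ideal are set to `0`. -/
inductive tlRel (n : ℕ) : Hecke R u n → Hecke R u n → Prop where
  | cubic (i j : Fin (n - 1)) (hij : (j : ℕ) = (i : ℕ) + 1) :
      tlRel n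
        (1 + (u : R) • (toHecke R u n (sB n i) + toHecke R u n (sB n j))
          + ((u : R) ^ 2) • (toHecke R u n (sB n i) * toHecke R u n (sB n j)
              + toHecke R u n (sB n j) * toHecke R u n (sB n i))
          + ((u : R) ^ 3) •
              (toHecke R u n (sB n i) * toHecke R u n (sB n j) * toHecke R u n (sB n i)))
        0

/-- The generalized Temperley–Lieb algebra of type B, `TL_{1,n}`. -/
abbrev TL (n : ℕ) := RingQuot (tlRel R u n)

/-- The canonical (multiplicative) map `B_{1,n} → TL_{1,n}`. -/
noncomputable def toTL (n : ℕ) : MixedBraidGroup n →* TL R u n :=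
  (RingQuot.mkRingHom (tlRel R u n)).toMonoidHom.comp (toHecke R u n)

/-- The element `t` of `TL_{1,n}`. -/
noncomputable def tT (n : ℕ) : TL R u n := toTL R u n (tB n)

/-- The element `σ₁` of `TL_{1,n}` (needs `2 ≤ n`). -/
noncomputable def σ₁T (n : ℕ) (hn : 2 ≤ n) : TL R u n :=
  toTL R u n (sB n ⟨0, by omega⟩)

/-- The element `σ₁⁻¹` of `TL_{1,n}`, the image of the inverse braid
generator (needs `2 ≤ n`). -/
noncomputable def σ₁invT (n : ℕ) (hn : 2 ≤ n) : TL R u n :=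
  toTL R u n (sB n ⟨0, by omega⟩)⁻¹

/-- The looping element `t₁ = σ₁ t σ₁` of `TL_{1,n}` (needs `2 ≤ n`). -/
noncomputable def t₁T (n : ℕ) (hn : 2 ≤ n) : TL R u n :=
  toTL R u n (sB n ⟨0, by omega⟩ * tB n * sB n ⟨0, by omega⟩)

lemma toTL_eq (n : ℕ) (g : MixedBraidGroup n) :
    toTL R u n g = RingQuot.mkRingHom (tlRel R u n) (toHecke R u n g) := rfl

lemma toHecke_eq (n : ℕ) (g : MixedBraidGroup n) :
    toHecke R u n g
      = RingQuot.mkRingHom (heckeRel R u n) (MonoidAlgebra.of R (MixedBraidGroup n) g) := rfl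

lemma mkRingHom_eq_mkAlgHom {A : Type*} [Ring A] [Algebra R A]
    (r : A → A → Prop) (x : A) :
    RingQuot.mkRingHom r x = RingQuot.mkAlgHom R r x :=
  (RingHom.congr_fun (RingQuot.mkAlgHom_coe R r) x).symm

lemma mk_smul {A : Type*} [Ring A] [Algebra R A] (r : A → A → Prop) (c : R) (x : A) :
    RingQuot.mkRingHom r (c • x) = c • RingQuot.mkRingHom r x := by
  rw [mkRingHom_eq_mkAlgHom R, mkRingHom_eq_mkAlgHom R]
  exact map_smul (RingQuot.mkAlgHom R r) c x

lemma hecke_quad (n : ℕ) (i : Fin (n - 1)) :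
    toHecke R u n (sB n i) * toHecke R u n (sB n i)
      = ((u : R) - ((u⁻¹ : Rˣ) : R)) • toHecke R u n (sB n i) + 1 := by
  rw [toHecke_eq, ← map_mul, RingQuot.mkRingHom_rel (heckeRel.quad i), map_add, map_one]
  congr 1
  exact mk_smul R (A := MonoidAlgebra R (MixedBraidGroup n)) _ _ _

lemma tl_quad :
    σ₁T R u 2 le_rfl * σ₁T R u 2 le_rfl
      = ((u : R) - ((u⁻¹ : Rˣ) : R)) • σ₁T R u 2 le_rfl + 1 := by
  show toTL R u 2 _ * toTL R u 2 _ = _ • toTL R u 2 _ + 1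
  rw [toTL_eq, ← map_mul, hecke_quad, map_add, map_one]
  congr 1
  exact mk_smul R (A := Hecke R u 2) _ _ _

lemma t1s_eq :
    t₁T R u 2 le_rfl * σ₁T R u 2 le_rfl
      = σ₁T R u 2 le_rfl * tT R u 2 * σ₁T R u 2 le_rfl * σ₁T R u 2 le_rfl := by
  unfold t₁T σ₁T tT
  rw [map_mul, map_mul]


/-- Equation (tor) of Theorem 8 (mthm) of the paper. Assume `1 + u²` is a unit
`v` of `R` and set `z = −(u(1+u²))⁻¹`. If `f(tσ₁) = z·f(t)`, then the positive
braid-band-move equation `f(t) = −((1+u²)/u)·u⁶·f(t₁σ₁)` holds iff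
`(1 − u⁶)(1 − u²)·f(t) = 0` in `M`, so `f(t)` generates torsion. -/
theorem torsion_equation (M : Type) [AddCommGroup M] [Module R M]
    (v : Rˣ) (hv : (v : R) = 1 + (u : R) ^ 2)
    (f : TL R u 2 →ₗ[R] M) (hf : ∀ a b : TL R u 2, f (a * b) = f (b * a))
    (hz : f (tT R u 2 * σ₁T R u 2 le_rfl)
      = (-(((u⁻¹ : Rˣ) : R) * ((v⁻¹ : Rˣ) : R))) • f (tT R u 2)) :
    (f (tT R u 2)
      = (-((1 + (u : R) ^ 2) * ((u⁻¹ : Rˣ) : R)) * (u : R) ^ 6) •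
          f (t₁T R u 2 le_rfl * σ₁T R u 2 le_rfl))
    ↔ ((1 - (u : R) ^ 6) * (1 - (u : R) ^ 2)) • f (tT R u 2) = 0 := by
  have a1 : (u : R) * ((u⁻¹ : Rˣ) : R) = 1 := Units.mul_inv u
  have h2 : (1 + (u : R) ^ 2) * ((v⁻¹ : Rˣ) : R) = 1 := by
    rw [← hv]; exact Units.mul_inv v
  set a : R := (u : R) with ha
  set ai : R := ((u⁻¹ : Rˣ) : R) with hai
  set vi : R := ((v⁻¹ : Rˣ) : R) with hvi
  have h1 : a * ai = 1 := a1
  set σ : TL R u 2 := σ₁T R u 2 le_rfl with hσ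
  set t : TL R u 2 := tT R u 2 with ht
  set z : R := -(ai * vi) with hzdef
  set d : R := a - ai with hd
  have hq : σ * σ = d • σ + 1 := tl_quad R u
  have key : f (t₁T R u 2 le_rfl * σ₁T R u 2 le_rfl)
      = (d * (d * z + 1) + z) • f t := by
    rw [t1s_eq R u]
    have e1 : σ * t * σ * σ = d • (σ * t * σ) + σ * t := by
      rw [mul_assoc, hq, mul_add, mul_one, mul_smul_comm]
    rw [e1, map_add, map_smul]
    have e2 : f (σ * t * σ) = d • f (t * σ) + f t := by
      rw [mul_assoc, hf σ (t * σ), mul_assoc, hq, mul_add, mul_one, mul_smul_comm,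
        map_add, map_smul]
    have e3 : f (t * σ) = z • f t := hz
    rw [e2, e3, hf σ t, e3]
    rw [smul_add, smul_smul, smul_smul]
    module
  rw [key, smul_smul]
  set A : R := -((1 + a ^ 2) * ai) * a ^ 6 with hA
  have hiff : ∀ s : R, (f t = s • f t ↔ (1 - s) • f t = 0) := by
    intro s
    rw [sub_smul, one_smul, sub_eq_zero]
  rw [hiff]
  have hs : 1 - A * (d * (d * z + 1) + z) = (1 - a ^ 6) * (1 - a ^ 2) := by
    rw [hA, hd, hzdef]
    linear_combination (-(a^2*vi) - a^3*ai*vi - a^4 - a^4*ai^2*vi - a^5*ai - a^5*ai^3*vi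
      + a^6*ai^2*vi - a^7*ai - a^7*ai^3*vi + a^8 - a^8*vi + 2*a^8*ai^2*vi
      - a^9*ai*vi) * h1 + (-(a^2) + a^4 - a^6) * h2
  rw [hs]
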